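/- The free Poisson (Marchenko–Pastur) distribution of parameter 1 has k-th moment equal to the k-th Catalan number C_k = (1/(k+1))·binom(2k,k). -/

import Mathlib

open MeasureTheory Real Set
open scoped NNReal ENNReal

/-- The free Poisson (Marchenko–Pastur) distribution of parameter 1,
with density √(x(4-x))/(2πx) on (0, 4]. -/
noncomputable def freePoisson : Measure ℝ :=
  (volume.restrict (Set.Ioc (0 : ℝ) 4)).withDensity
    (fun x => ENNReal.ofReal (Real.sqrt (x * (4 - x)) / (2 * π * x)))

lemma wallis (n : ℕ) : ∫ x in (0:ℝ)..(π/2), sin x ^ (2*n)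
    = π / 2 * (Nat.choose (2*n) n) / 4 ^ n := by
  induction n with
  | zero => simp
  | succ n ih =>
    have key : ((n:ℝ)+1) * ((2*(n+1)).choose (n+1)) = 2*(2*(n:ℝ)+1) * ((2*n).choose n) := by
      have := Nat.succ_mul_centralBinom_succ n
      simp only [Nat.centralBinom] at this
      exact_mod_cast this
    have h2 : 2 * (n+1) = 2*n + 2 := by ring
    rw [h2, integral_sin_pow, ih]
    rw [← h2]
    simp only [Real.sin_zero, Real.cos_pi_div_two, cos_zero, mul_zero, zero_pow, mul_one]
    have h4 : (4:ℝ)^n > 0 := by positivity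
    field_simp
    push_cast
    linear_combination (-(2*π*4^n)) * key

lemma wallisJ (k : ℕ) : ∫ x in (0:ℝ)..(π/2), sin x ^ (2*k) * cos x ^ 2
    = π * (Nat.choose (2*k) k) / ((k+1) * 4^(k+1)) := by
  have hcongr : ∀ x ∈ Set.uIcc (0:ℝ) (π/2),
      sin x ^ (2*k) * cos x ^ 2 = sin x ^ (2*k) - sin x ^ (2*(k+1)) := by
    intro x _
    have := sin_sq_add_cos_sq x
    have h2 : 2*(k+1) = 2*k + 2 := by ring
    rw [h2, pow_add]
    linear_combination (sin x ^ (2*k)) * this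
  rw [intervalIntegral.integral_congr hcongr, intervalIntegral.integral_sub
      (by apply Continuous.intervalIntegrable; fun_prop)
      (by apply Continuous.intervalIntegrable; fun_prop),
    wallis k, wallis (k+1)]
  have key : ((k:ℝ)+1) * ((2*(k+1)).choose (k+1)) = 2*(2*(k:ℝ)+1) * ((2*k).choose k) := by
    have := Nat.succ_mul_centralBinom_succ k
    simp only [Nat.centralBinom] at this
    exact_mod_cast this
  have h4 : (4:ℝ)^k > 0 := by positivity
  field_simp
  linear_combination (-(4:ℝ)^k) * key

theorem moments_freePoisson (k : ℕ) :
    ∫ x : ℝ, x ^ k ∂freePoisson = (Nat.choose (2 * k) k : ℝ) / (k + 1) := by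
  have hπ : 0 < π := pi_pos
  set d : ℝ → ℝ := fun x => Real.sqrt (x * (4 - x)) / (2 * π * x) with hd
  have hdm : Measurable d := by fun_prop
  have h1 : freePoisson = (volume.restrict (Set.Ioc (0:ℝ) 4)).withDensity
      (fun x => ((Real.toNNReal (d x) : ℝ≥0) : ℝ≥0∞)) := by
    simp only [freePoisson, ENNReal.ofReal, hd]
  rw [h1, integral_withDensity_eq_integral_smul hdm.real_toNNReal]
  rw [MeasureTheory.integral_Ioc_eq_integral_Ioo]
  have hs2 : ∀ θ ∈ Set.Ioo (0:ℝ) (π/2), 0 < sin θ ∧ 0 < cos θ ∧ sin θ < 1 := by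
    intro θ ⟨h0, h1⟩
    refine ⟨sin_pos_of_pos_of_lt_pi h0 (by linarith), cos_pos_of_mem_Ioo ⟨by linarith, h1⟩, ?_⟩
    have := Real.strictMonoOn_sin (a := θ) (b := π/2) ⟨by linarith, by linarith⟩
      ⟨by linarith, le_refl _⟩ h1
    simpa using this
  have himg : (fun θ : ℝ => 4 * sin θ ^ 2) '' Set.Ioo 0 (π/2) = Set.Ioo (0:ℝ) 4 := by
    ext y; constructor
    · rintro ⟨θ, hθ, rfl⟩
      obtain ⟨hs, hc, hs1⟩ := hs2 θ hθ
      simp only [Set.mem_Ioo]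
      exact ⟨by positivity, by nlinarith⟩
    · rintro ⟨hy0, hy4⟩
      have hsy : 0 < Real.sqrt y := Real.sqrt_pos.mpr hy0
      have hsy2 : Real.sqrt y < 2 := by
        rw [show (2:ℝ) = Real.sqrt 4 by rw [show (4:ℝ) = 2^2 by norm_num, Real.sqrt_sq]; norm_num]
        exact Real.sqrt_lt_sqrt hy0.le hy4
      refine ⟨arcsin (Real.sqrt y / 2), ⟨arcsin_pos.mpr (by linarith),
        arcsin_lt_pi_div_two.mpr (by linarith)⟩, ?_⟩
      have hsin : sin (arcsin (Real.sqrt y / 2)) = Real.sqrt y / 2 :=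
        sin_arcsin (by linarith) (by linarith)
      show 4 * sin (arcsin (Real.sqrt y / 2)) ^ 2 = y
      rw [hsin]
      rw [div_pow, Real.sq_sqrt hy0.le]
      ring
  have hinj : Set.InjOn (fun θ : ℝ => 4 * sin θ ^ 2) (Set.Ioo 0 (π/2)) := by
    intro a ha b hb hab
    obtain ⟨hsa, _, _⟩ := hs2 a ha
    obtain ⟨hsb, _, _⟩ := hs2 b hb
    have hab' : 4 * sin a ^ 2 = 4 * sin b ^ 2 := hab
    have hsin : sin a = sin b := by nlinarith
    exact injOn_sin ⟨by linarith [ha.1], by linarith [ha.2]⟩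
      ⟨by linarith [hb.1], by linarith [hb.2]⟩ hsin
  have hderiv : ∀ θ ∈ Set.Ioo (0:ℝ) (π/2), HasDerivWithinAt (fun θ : ℝ => 4 * sin θ ^ 2)
      (8 * sin θ * cos θ) (Set.Ioo 0 (π/2)) θ := by
    intro θ _
    have h : HasDerivAt (fun θ : ℝ => 4 * sin θ ^ 2) (4 * (2 * sin θ ^ 1 * cos θ)) θ :=
      HasDerivAt.const_mul 4 ((hasDerivAt_sin θ).pow 2)
    have h8 : 4 * (2 * sin θ ^ 1 * cos θ) = 8 * sin θ * cos θ := by ring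
    rw [h8] at h
    exact h.hasDerivWithinAt
  rw [← himg, integral_image_eq_integral_abs_deriv_smul measurableSet_Ioo hderiv hinj]
  have heq : Set.EqOn (fun θ : ℝ => |8 * sin θ * cos θ| •
      ((Real.toNNReal (d (4 * sin θ ^ 2)) : ℝ≥0) • (4 * sin θ ^ 2) ^ k))
      (fun θ : ℝ => (4:ℝ)^(k+1)/π * (sin θ ^ (2*k) * cos θ ^ 2)) (Set.Ioo 0 (π/2)) := by
    intro θ hθ
    obtain ⟨hs, hc, _⟩ := hs2 θ hθ
    have hsq : (4 * sin θ^2) * (4 - 4 * sin θ^2) = (4 * sin θ * cos θ)^2 := by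
      nlinarith [sin_sq_add_cos_sq θ]
    have hdval : d (4 * sin θ ^ 2) = (4 * sin θ * cos θ) / (2 * π * (4 * sin θ ^ 2)) := by
      simp only [hd]
      rw [hsq, Real.sqrt_sq (by positivity)]
    have hdnn : 0 ≤ d (4 * sin θ ^ 2) := by rw [hdval]; positivity
    simp only [NNReal.smul_def, Real.coe_toNNReal _ hdnn, smul_eq_mul]
    rw [abs_of_pos (by positivity), hdval]
    rw [show (4 * sin θ ^ 2) ^ k = 4^k * sin θ ^ (2*k) by rw [mul_pow, ← pow_mul]]
    field_simp
    ring
  rw [MeasureTheory.setIntegral_congr_fun measurableSet_Ioo heq]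
  rw [MeasureTheory.integral_const_mul]
  rw [← MeasureTheory.integral_Ioc_eq_integral_Ioo,
    ← intervalIntegral.integral_of_le (by positivity : (0:ℝ) ≤ π/2)]
  rw [wallisJ k]
  have h4 : (4:ℝ)^(k+1) > 0 := by positivity
  have hk1 : ((k:ℝ)+1) > 0 := by positivity
  field_simp
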